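/- Let X be a BMC on (S,𝒮) with kernel 𝒫 and let 𝒬 = (P₀+P₁)/2. For all bounded measurable f : S → ℝ, x ∈ S and n ∈ ℕ (assuming the quantities are well defined): (i) E_x[M_{𝔾_n}(f)] = 2^n 𝒬^n f(x); (ii) E_x[M_{𝔾_n}(f)²] = 2^n 𝒬^n(f²)(x) + Σ_{k=0}^{n−1} 2^{n+k} 𝒬^{n−k−1}( 𝒫( 𝒬^k f ⊗ 𝒬^k f ) )(x). -/

import Mathlib

open MeasureTheory ProbabilityTheory Filter ENNReal

/-- The kernel `𝒬 = (P₀ + P₁)/2` applied at `x`. -/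
noncomputable def Qmeas {S : Type*} [MeasurableSpace S]
    (P : Kernel S (S × S)) (x : S) : Measure S :=
  (2 : ℝ≥0∞)⁻¹ • ((P x).map Prod.fst + (P x).map Prod.snd)

/-- `𝒬 f`. -/
noncomputable def Qfun {S : Type*} [MeasurableSpace S]
    (P : Kernel S (S × S)) (f : S → ℝ) (x : S) : ℝ :=
  ∫ y, f y ∂(Qmeas P x)

/-- `𝒬ⁿ f`, by iteration. -/
noncomputable def Qpow {S : Type*} [MeasurableSpace S]
    (P : Kernel S (S × S)) (n : ℕ) (f : S → ℝ) : S → ℝ :=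
  (Qfun P)^[n] f

/-- the distribution `ν 𝒬ᵏ` of the auxiliary chain after `k` steps started from `ν`. -/
noncomputable def nuQ {S : Type*} [MeasurableSpace S]
    (P : Kernel S (S × S)) (ν : Measure S) : ℕ → Measure S
  | 0 => ν
  | k + 1 => (nuQ P ν k).bind (Qmeas P)

/-- The `n`-th generation `𝔾_n = {0,1}ⁿ` of the full binary tree `𝕋`, as a finset of
`List Bool` (nodes of the tree are finite words on `{0,1}`). -/
def gen (n : ℕ) : Finset (List Bool) :=
  Finset.univ.image (fun v : Fin n → Bool => List.ofFn v)

/-- The tree `𝕋_n` up to the `n`-th generation. -/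
def treeUpTo (n : ℕ) : Finset (List Bool) :=
  (Finset.range (n + 1)).biUnion gen

/-- The σ-field generated by `(X_u, u ∈ 𝕋_k)`. -/
def treeSigma {Ω S : Type*} [MeasurableSpace Ω] [MeasurableSpace S]
    (X : List Bool → Ω → S) (k : ℕ) : MeasurableSpace Ω :=
  ⨆ (u : List Bool) (_ : u.length ≤ k), MeasurableSpace.comap (X u) inferInstance

/-- `X = (X_i, i ∈ 𝕋)` is a bifurcating Markov chain on `S` with initial distribution `ν`
and probability kernel `𝒫` (w.r.t. the ambient probability `Pr`): `X_∅ ∼ ν`, each `X_u`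
is measurable, and the branching Markov property holds: for any generation `k` and any
family of bounded measurable `g_u : S × S² → ℝ`,
`E[∏_{u∈𝔾_k} g_u(X_u, X_{u0}, X_{u1}) | σ(X_j, j∈𝕋_k)] = ∏_{u∈𝔾_k} (𝒫g_u)(X_u)` a.s. -/
structure IsBMC {Ω S : Type*} [MeasurableSpace Ω] [MeasurableSpace S]
    (Pr : Measure Ω) (P : Kernel S (S × S)) (ν : Measure S)
    (X : List Bool → Ω → S) : Prop where
  meas : ∀ u, Measurable (X u)
  init : Pr.map (X []) = ν
  branching : ∀ (k : ℕ) (g : List Bool → S → S × S → ℝ),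
    (∀ u, Measurable (Function.uncurry (g u))) →
    (∀ u, ∃ C : ℝ, ∀ x yz, |g u x yz| ≤ C) →
    Pr[fun ω => ∏ u ∈ gen k,
          g u (X u ω) (X (u ++ [false]) ω, X (u ++ [true]) ω) | treeSigma X k]
      =ᵐ[Pr] fun ω => ∏ u ∈ gen k, ∫ yz, g u (X u ω) yz ∂(P (X u ω))

section Aux


lemma integrable_of_bdd {α : Type*} [MeasurableSpace α] {μ : Measure α} [IsFiniteMeasure μ]
    {h : α → ℝ} (hm : AEStronglyMeasurable h μ) {C : ℝ} (hb : ∀ a, |h a| ≤ C) :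
    Integrable h μ :=
  Integrable.mono' (integrable_const C) hm (ae_of_all _ fun a => by
    rw [Real.norm_eq_abs]; exact hb a)

variable {S : Type*} [MeasurableSpace S] (P : Kernel S (S × S)) [IsMarkovKernel P]

instance Qmeas.instIsProbabilityMeasure (x : S) : IsProbabilityMeasure (Qmeas P x) := by
  constructor
  simp [Qmeas, Measure.map_apply measurable_fst MeasurableSet.univ,
    Measure.map_apply measurable_snd MeasurableSet.univ]
  exact ENNReal.inv_two_add_inv_two


/-- `𝒫 g` for a function of the pair of children. -/
noncomputable def Pker (g : S × S → ℝ) (y : S) : ℝ := ∫ yz, g yz ∂(P y)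

lemma pker_measurable {g : S × S → ℝ} (hg : Measurable g) : Measurable (Pker P g) :=
  (StronglyMeasurable.integral_kernel_prod_right' (κ := P)
    (f := fun p : S × (S × S) => g p.2)
    (hg.stronglyMeasurable.comp_measurable measurable_snd)).measurable

lemma pker_bound {g : S × S → ℝ} {C : ℝ} (hb : ∀ yz, |g yz| ≤ C) (y : S) :
    |Pker P g y| ≤ C := by
  have h := norm_integral_le_of_norm_le_const (μ := P y) (f := g) (C := C)
    (ae_of_all _ fun yz => by rw [Real.norm_eq_abs]; exact hb yz)
  simpa [Real.norm_eq_abs, Pker] using h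

lemma pker_add {g₁ g₂ : S × S → ℝ} (h₁ : Measurable g₁) (h₂ : Measurable g₂)
    {C₁ C₂ : ℝ} (hb₁ : ∀ yz, |g₁ yz| ≤ C₁) (hb₂ : ∀ yz, |g₂ yz| ≤ C₂) (y : S) :
    Pker P (fun yz => g₁ yz + g₂ yz) y = Pker P g₁ y + Pker P g₂ y :=
  integral_add (integrable_of_bdd h₁.aestronglyMeasurable hb₁)
    (integrable_of_bdd h₂.aestronglyMeasurable hb₂)

lemma pker_const_mul (c : ℝ) (g : S × S → ℝ) (y : S) :
    Pker P (fun yz => c * g yz) y = c * Pker P g y :=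
  integral_const_mul c g

lemma qfun_kernel {f : S → ℝ} (hfm : Measurable f) {C : ℝ} (hfb : ∀ y, |f y| ≤ C)
    (x : S) :
    Qfun P f x = 2⁻¹ * (∫ yz, f yz.1 ∂(P x) + ∫ yz, f yz.2 ∂(P x)) := by
  have h1 : Integrable f ((P x).map Prod.fst) := by
    haveI : IsProbabilityMeasure ((P x).map Prod.fst) :=
      Measure.isProbabilityMeasure_map measurable_fst.aemeasurable
    exact integrable_of_bdd hfm.aestronglyMeasurable hfb
  have h2 : Integrable f ((P x).map Prod.snd) := by
    haveI : IsProbabilityMeasure ((P x).map Prod.snd) :=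
      Measure.isProbabilityMeasure_map measurable_snd.aemeasurable
    exact integrable_of_bdd hfm.aestronglyMeasurable hfb
  rw [Qfun, Qmeas, integral_smul_measure, integral_add_measure h1 h2,
    integral_map measurable_fst.aemeasurable hfm.aestronglyMeasurable,
    integral_map measurable_snd.aemeasurable hfm.aestronglyMeasurable]
  simp [ENNReal.toReal_inv]

lemma qfun_eq_pker {f : S → ℝ} (hfm : Measurable f) {C : ℝ} (hfb : ∀ y, |f y| ≤ C) :
    Qfun P f = fun x => 2⁻¹ * (Pker P (fun yz => f yz.1) x + Pker P (fun yz => f yz.2) x) :=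
  funext fun x => qfun_kernel P hfm hfb x

lemma qfun_measurable {f : S → ℝ} (hfm : Measurable f) {C : ℝ} (hfb : ∀ y, |f y| ≤ C) :
    Measurable (Qfun P f) := by
  rw [qfun_eq_pker P hfm hfb]
  exact (measurable_const.mul ((pker_measurable P (hfm.comp measurable_fst)).add
    (pker_measurable P (hfm.comp measurable_snd))))

lemma qfun_bound {f : S → ℝ} {C : ℝ} (hfb : ∀ y, |f y| ≤ C) (x : S) :
    |Qfun P f x| ≤ C := by
  have h := norm_integral_le_of_norm_le_const (μ := Qmeas P x) (f := f) (C := C)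
    (ae_of_all _ fun y => by rw [Real.norm_eq_abs]; exact hfb y)
  simpa [Real.norm_eq_abs, Qfun] using h

lemma qfun_add {f g : S → ℝ} (hf : Measurable f) (hg : Measurable g)
    {Cf Cg : ℝ} (hbf : ∀ y, |f y| ≤ Cf) (hbg : ∀ y, |g y| ≤ Cg) :
    Qfun P (fun y => f y + g y) = fun x => Qfun P f x + Qfun P g x :=
  funext fun x => integral_add (integrable_of_bdd hf.aestronglyMeasurable hbf)
    (integrable_of_bdd hg.aestronglyMeasurable hbg)

lemma qfun_const_mul (c : ℝ) (f : S → ℝ) :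
    Qfun P (fun y => c * f y) = fun x => c * Qfun P f x :=
  funext fun x => integral_const_mul c f

lemma qpow_succ (n : ℕ) (f : S → ℝ) : Qpow P (n + 1) f = Qpow P n (Qfun P f) :=
  Function.iterate_succ_apply _ _ _

lemma qpow_zero (f : S → ℝ) : Qpow P 0 f = f := rfl

lemma qpow_meas_bdd {f : S → ℝ} (hfm : Measurable f) {C : ℝ} (hfb : ∀ y, |f y| ≤ C) :
    ∀ n, Measurable (Qpow P n f) ∧ ∀ y, |Qpow P n f y| ≤ C := by
  intro n
  induction n generalizing f C with
  | zero => exact ⟨hfm, hfb⟩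
  | succ n ih =>
    rw [qpow_succ]
    exact ih (qfun_measurable P hfm hfb) (qfun_bound P hfb)

lemma qpow_const_mul {f : S → ℝ} (hfm : Measurable f) {C : ℝ} (hfb : ∀ y, |f y| ≤ C)
    (c : ℝ) : ∀ n, Qpow P n (fun y => c * f y) = fun x => c * Qpow P n f x := by
  intro n
  induction n generalizing f C with
  | zero => rfl
  | succ n ih =>
    rw [qpow_succ, qpow_succ, qfun_const_mul]
    exact ih (qfun_measurable P hfm hfb) (qfun_bound P hfb) 

lemma qpow_add {f g : S → ℝ} (hf : Measurable f) (hg : Measurable g)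
    {Cf Cg : ℝ} (hbf : ∀ y, |f y| ≤ Cf) (hbg : ∀ y, |g y| ≤ Cg) :
    ∀ n, Qpow P n (fun y => f y + g y) = fun x => Qpow P n f x + Qpow P n g x := by
  intro n
  induction n generalizing f g Cf Cg with
  | zero => rfl
  | succ n ih =>
    rw [qpow_succ, qpow_succ, qpow_succ, qfun_add P hf hg hbf hbg]
    exact ih (qfun_measurable P hf hbf) (qfun_measurable P hg hbg)
      (qfun_bound P hbf) (qfun_bound P hbg)

end Aux

lemma mem_gen {n : ℕ} {u : List Bool} : u ∈ gen n ↔ u.length = n := by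
  constructor
  · intro h
    obtain ⟨v, -, rfl⟩ := Finset.mem_image.mp h
    simp
  · intro h
    subst h
    exact Finset.mem_image.mpr ⟨u.get, Finset.mem_univ _, List.ofFn_get u⟩

lemma gen_zero : gen 0 = {[]} := by
  ext u; simp [mem_gen, List.length_eq_zero_iff]

lemma gen_succ_image (n : ℕ) :
    gen (n + 1)
      = (gen n ×ˢ (Finset.univ : Finset Bool)).image (fun p => p.1 ++ [p.2]) := by
  ext u
  simp only [mem_gen, Finset.mem_image, Finset.mem_product, Finset.mem_univ, and_true]
  constructor
  · intro h
    have hne : u ≠ [] := by intro e; simp [e] at h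
    refine ⟨(u.dropLast, u.getLast hne), ?_, List.dropLast_append_getLast hne⟩
    simp only [mem_gen]
    simp [List.length_dropLast, h]
  · rintro ⟨⟨v, b⟩, hv, rfl⟩
    simp [hv]

lemma append_singleton_injOn (n : ℕ) :
    ∀ p ∈ gen n ×ˢ (Finset.univ : Finset Bool),
      ∀ q ∈ gen n ×ˢ (Finset.univ : Finset Bool),
        (fun p : List Bool × Bool => p.1 ++ [p.2]) p
          = (fun p : List Bool × Bool => p.1 ++ [p.2]) q → p = q := by
  rintro ⟨v, b⟩ - ⟨w, c⟩ - h
  simp only at h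
  obtain ⟨h1, h2⟩ := List.append_inj' h (by simp)
  simp_all

lemma sum_gen_succ {M : Type*} [AddCommMonoid M] (F : List Bool → M) (n : ℕ) :
    ∑ u ∈ gen (n + 1), F u
      = ∑ u ∈ gen n, (F (u ++ [false]) + F (u ++ [true])) := by
  rw [gen_succ_image, Finset.sum_image (append_singleton_injOn n), Finset.sum_product]
  refine Finset.sum_congr rfl fun v _ => ?_
  rw [Fintype.sum_bool, add_comm]

lemma prod_pair_eq {ι M : Type*} [CommMonoid M] [DecidableEq ι] {s : Finset ι} {a : ι → M}
    {u v : ι} (hu : u ∈ s) (hv : v ∈ s) (huv : u ≠ v)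
    (h1 : ∀ w ∈ s, w ≠ u → w ≠ v → a w = 1) : ∏ w ∈ s, a w = a u * a v := by
  rw [← Finset.mul_prod_erase s a hu,
    ← Finset.mul_prod_erase _ a (Finset.mem_erase.mpr ⟨huv.symm, hv⟩)]
  have : ∏ w ∈ (s.erase u).erase v, a w = 1 := by
    refine Finset.prod_eq_one fun w hw => ?_
    have h1' := Finset.mem_erase.mp hw
    have h2' := Finset.mem_erase.mp h1'.2
    exact h1 w h2'.2 h2'.1 h1'.1
  rw [this, mul_one]

section BMC

variable {Ω S : Type*} [MeasurableSpace Ω] [MeasurableSpace S]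
    (Pr : Measure Ω) [IsProbabilityMeasure Pr]
    (P : Kernel S (S × S)) [IsMarkovKernel P]
    {ν : Measure S} {X : List Bool → Ω → S}

lemma treeSigma_le (hX : IsBMC Pr P ν X) (k : ℕ) :
    treeSigma X k ≤ ‹MeasurableSpace Ω› :=
  iSup₂_le fun u _ => (hX.meas u).comap_le

lemma bmc_prod_integral (hX : IsBMC Pr P ν X) (k : ℕ) (g : List Bool → S → S × S → ℝ)
    (hgm : ∀ u, Measurable (Function.uncurry (g u)))
    (hgb : ∀ u, ∃ C : ℝ, ∀ x yz, |g u x yz| ≤ C) :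
    ∫ ω, ∏ u ∈ gen k, g u (X u ω) (X (u ++ [false]) ω, X (u ++ [true]) ω) ∂Pr
      = ∫ ω, ∏ u ∈ gen k, ∫ yz, g u (X u ω) yz ∂(P (X u ω)) ∂Pr := by
  have h := integral_congr_ae (hX.branching k g hgm hgb)
  rwa [integral_condExp (treeSigma_le Pr P hX k)] at h

/-- integral of a function of the children of a single node of generation `k`. -/
lemma bmc_single (hX : IsBMC Pr P ν X) {k : ℕ} {u₀ : List Bool} (hu : u₀ ∈ gen k)
    {g : S × S → ℝ} (hgm : Measurable g) {C : ℝ} (hgb : ∀ yz, |g yz| ≤ C) :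
    ∫ ω, g (X (u₀ ++ [false]) ω, X (u₀ ++ [true]) ω) ∂Pr
      = ∫ ω, Pker P g (X u₀ ω) ∂Pr := by
  classical
  have key := bmc_prod_integral Pr P hX k
    (fun w _ yz => if w = u₀ then g yz else 1)
    (fun w => by
      by_cases h : w = u₀ <;>
        simp only [Function.uncurry, h, if_true, if_false] <;>
        [exact hgm.comp measurable_snd; exact measurable_const])
    (fun w => ⟨max C 1, fun x yz => by
      by_cases h : w = u₀ <;> simp only [h, if_true, if_false]
      · exact (hgb yz).trans (le_max_left _ _)
      · simp⟩)
  have hL : ∀ ω, (∏ u ∈ gen k,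
      (if u = u₀ then g (X (u ++ [false]) ω, X (u ++ [true]) ω) else 1))
      = g (X (u₀ ++ [false]) ω, X (u₀ ++ [true]) ω) := by
    intro ω
    rw [Finset.prod_eq_single_of_mem u₀ hu (fun b _ hb => if_neg hb)]
    rw [if_pos rfl]
  have hR : ∀ ω, (∏ u ∈ gen k,
      ∫ yz, (if u = u₀ then g yz else 1) ∂(P (X u ω)))
      = Pker P g (X u₀ ω) := by
    intro ω
    rw [Finset.prod_eq_single_of_mem u₀ hu (fun b _ hb => by simp [if_neg hb])]
    simp only [if_pos rfl]; rfl
  simp only [hL] at key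
  simp only [hR] at key
  exact key

/-- integral of a product of functions of the children of two distinct nodes. -/
lemma bmc_pair (hX : IsBMC Pr P ν X) {k : ℕ} {u₀ v₀ : List Bool}
    (hu : u₀ ∈ gen k) (hv : v₀ ∈ gen k) (huv : u₀ ≠ v₀)
    {g₁ g₂ : S × S → ℝ} (hgm₁ : Measurable g₁) (hgm₂ : Measurable g₂)
    {C₁ C₂ : ℝ} (hgb₁ : ∀ yz, |g₁ yz| ≤ C₁) (hgb₂ : ∀ yz, |g₂ yz| ≤ C₂) :
    ∫ ω, g₁ (X (u₀ ++ [false]) ω, X (u₀ ++ [true]) ω)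
        * g₂ (X (v₀ ++ [false]) ω, X (v₀ ++ [true]) ω) ∂Pr
      = ∫ ω, Pker P g₁ (X u₀ ω) * Pker P g₂ (X v₀ ω) ∂Pr := by
  classical
  have key := bmc_prod_integral Pr P hX k
    (fun w _ yz => if w = u₀ then g₁ yz else if w = v₀ then g₂ yz else 1)
    (fun w => by
      rcases eq_or_ne w u₀ with h | h
      · subst h
        simp only [Function.uncurry, if_pos rfl]
        exact hgm₁.comp measurable_snd
      · rcases eq_or_ne w v₀ with h' | h'
        · subst h'
          simp only [Function.uncurry, if_neg h, if_pos rfl]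
          exact hgm₂.comp measurable_snd
        · simp only [Function.uncurry, if_neg h, if_neg h']
          exact measurable_const)
    (fun w => ⟨max C₁ (max C₂ 1), fun x yz => by
      show |if w = u₀ then g₁ yz else if w = v₀ then g₂ yz else 1| ≤ max C₁ (max C₂ 1)
      rcases eq_or_ne w u₀ with h | h
      · rw [if_pos h]
        exact (hgb₁ yz).trans (le_max_left _ _)
      · rw [if_neg h]
        rcases eq_or_ne w v₀ with h' | h'
        · rw [if_pos h']
          exact (hgb₂ yz).trans ((le_max_left _ _).trans (le_max_right _ _))
        · rw [if_neg h']
          simp⟩)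
  have hL : ∀ ω, (∏ u ∈ gen k,
      (if u = u₀ then g₁ (X (u ++ [false]) ω, X (u ++ [true]) ω)
        else if u = v₀ then g₂ (X (u ++ [false]) ω, X (u ++ [true]) ω) else 1))
      = g₁ (X (u₀ ++ [false]) ω, X (u₀ ++ [true]) ω)
        * g₂ (X (v₀ ++ [false]) ω, X (v₀ ++ [true]) ω) := by
    intro ω
    rw [prod_pair_eq hu hv huv (fun w _ hw1 hw2 => by simp [if_neg hw1, if_neg hw2])]
    rw [if_pos rfl, if_neg huv.symm, if_pos rfl]
  have hR : ∀ ω, (∏ u ∈ gen k,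
      ∫ yz, (if u = u₀ then g₁ yz else if u = v₀ then g₂ yz else 1) ∂(P (X u ω)))
      = Pker P g₁ (X u₀ ω) * Pker P g₂ (X v₀ ω) := by
    intro ω
    rw [prod_pair_eq hu hv huv (fun w _ hw1 hw2 => by simp [if_neg hw1, if_neg hw2])]
    simp only [if_pos rfl, if_neg huv.symm]
    rfl
  simp only [hL] at key
  simp only [hR] at key
  exact key

end BMC

/-- Moments over a generation of a BMC started at `x` (i.e. `ν = δ_x`): for bounded
measurable `f`, (i) `E_x[M_{𝔾_n}(f)] = 2ⁿ 𝒬ⁿf(x)`, and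
(ii) `E_x[M_{𝔾_n}(f)²] = 2ⁿ 𝒬ⁿ(f²)(x) + Σ_{k<n} 2^{n+k} 𝒬^{n-k-1}(𝒫(𝒬ᵏf ⊗ 𝒬ᵏf))(x)`. -/
theorem bmc_generation_moments {Ω S : Type*} [MeasurableSpace Ω] [MeasurableSpace S]
    (Pr : Measure Ω) [IsProbabilityMeasure Pr]
    (P : Kernel S (S × S)) [IsMarkovKernel P]
    (x : S) (X : List Bool → Ω → S)
    (hX : IsBMC Pr P (Measure.dirac x) X)
    (f : S → ℝ) (hfm : Measurable f) (hfb : ∃ C : ℝ, ∀ y, |f y| ≤ C) (n : ℕ) :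
    (∫ ω, (∑ u ∈ gen n, f (X u ω)) ∂Pr = 2 ^ n * Qpow P n f x)
    ∧ ∫ ω, (∑ u ∈ gen n, f (X u ω)) ^ 2 ∂Pr
        = 2 ^ n * Qpow P n (fun y => (f y) ^ 2) x
          + ∑ k ∈ Finset.range n, (2 : ℝ) ^ (n + k)
              * Qpow P (n - k - 1)
                  (fun y => ∫ yz, Qpow P k f yz.1 * Qpow P k f yz.2 ∂(P y)) x := by
  have key : ∀ n : ℕ, ∀ f : S → ℝ, Measurable f → (∃ C : ℝ, ∀ y, |f y| ≤ C) →
      ((∫ ω, (∑ u ∈ gen n, f (X u ω)) ∂Pr = 2 ^ n * Qpow P n f x)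
        ∧ ∫ ω, (∑ u ∈ gen n, f (X u ω)) ^ 2 ∂Pr
            = 2 ^ n * Qpow P n (fun y => (f y) ^ 2) x
              + ∑ k ∈ Finset.range n, (2 : ℝ) ^ (n + k)
                  * Qpow P (n - k - 1)
                      (fun y => ∫ yz, Qpow P k f yz.1 * Qpow P k f yz.2 ∂(P y)) x) := by
    intro n
    induction n with
    | zero =>
      intro f hfm _
      have base : ∀ g : S → ℝ, Measurable g → ∫ ω, g (X [] ω) ∂Pr = g x := by
        intro g hg
        rw [← integral_map (hX.meas []).aemeasurable hg.aestronglyMeasurable, hX.init]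
        exact integral_dirac' g x hg.stronglyMeasurable
      constructor
      · simp only [gen_zero, Finset.sum_singleton, pow_zero, one_mul, qpow_zero]
        exact base f hfm
      · simp only [gen_zero, Finset.sum_singleton, pow_zero, one_mul, qpow_zero,
          Finset.range_zero, Finset.sum_empty, add_zero]
        exact base (fun y => f y ^ 2) (hfm.pow_const 2)
    | succ n ih =>
      intro f hfm hfb
      obtain ⟨C, hC⟩ := hfb
      have hC0 : 0 ≤ C := (abs_nonneg _).trans (hC x)
      -- basic objects
      set h : S × S → ℝ := fun yz => f yz.1 + f yz.2 with hh_def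
      have hhm : Measurable h := (hfm.comp measurable_fst).add (hfm.comp measurable_snd)
      have hhb : ∀ yz, |h yz| ≤ C + C :=
        fun yz => (abs_add_le _ _).trans (add_le_add (hC _) (hC _))
      set h2 : S × S → ℝ := fun yz => h yz * h yz with hh2_def
      have hh2m : Measurable h2 := hhm.mul hhm
      have hh2b : ∀ yz, |h2 yz| ≤ (C + C) * (C + C) := fun yz => by
        rw [abs_mul]
        exact mul_le_mul (hhb yz) (hhb yz) (abs_nonneg _) (by positivity)
      have hQfm : Measurable (Qfun P f) := qfun_measurable P hfm hC
      have hQfb : ∀ y, |Qfun P f y| ≤ C := qfun_bound P hC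
      set ψ : S → ℝ := fun y => 2 * Qfun P f y with hψ_def
      have hψm : Measurable ψ := measurable_const.mul hQfm
      have hψb : ∀ y, |ψ y| ≤ 2 * C := fun y => by
        rw [abs_mul, abs_two]
        exact mul_le_mul_of_nonneg_left (hQfb y) (by norm_num)
      have hPh2m : Measurable (Pker P h2) := pker_measurable P hh2m
      have hPh2b : ∀ y, |Pker P h2 y| ≤ (C + C) * (C + C) := pker_bound P hh2b
      set φ : S → ℝ := fun y => Pker P h2 y - ψ y * ψ y with hφ_def
      have hφm : Measurable φ := hPh2m.sub (hψm.mul hψm)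
      have hψψb : ∀ y, |ψ y * ψ y| ≤ (2 * C) * (2 * C) := fun y => by
        rw [abs_mul]
        exact mul_le_mul (hψb y) (hψb y) (abs_nonneg _) (by positivity)
      have hφb : ∀ y, |φ y| ≤ (C + C) * (C + C) + (2 * C) * (2 * C) := fun y => by
        rw [hφ_def]
        simp only []
        rw [sub_eq_add_neg]
        refine (abs_add_le _ _).trans ?_
        rw [abs_neg]
        exact add_le_add (hPh2b y) (hψψb y)
      -- integrability helpers
      have intc : ∀ (F : S → ℝ), Measurable F → ∀ (D : ℝ), (∀ y, |F y| ≤ D) →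
          ∀ u : List Bool, Integrable (fun ω => F (X u ω)) Pr :=
        fun F hF D hD u =>
          integrable_of_bdd (hF.comp (hX.meas u)).aestronglyMeasurable fun ω => hD _
      have intprod : ∀ u v : List Bool,
          Integrable (fun ω =>
            (f (X (u ++ [false]) ω) + f (X (u ++ [true]) ω))
              * (f (X (v ++ [false]) ω) + f (X (v ++ [true]) ω))) Pr := by
        intro u v
        refine integrable_of_bdd (AEStronglyMeasurable.mul ?_ ?_) (C := (C + C) * (C + C)) ?_
        · exact ((hfm.comp (hX.meas _)).add (hfm.comp (hX.meas _))).aestronglyMeasurable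
        · exact ((hfm.comp (hX.meas _)).add (hfm.comp (hX.meas _))).aestronglyMeasurable
        · intro ω
          rw [abs_mul]
          exact mul_le_mul ((abs_add_le _ _).trans (add_le_add (hC _) (hC _)))
            ((abs_add_le _ _).trans (add_le_add (hC _) (hC _))) (abs_nonneg _) (by positivity)
      have intψψ : ∀ u v : List Bool,
          Integrable (fun ω => ψ (X u ω) * ψ (X v ω)) Pr := by
        intro u v
        refine integrable_of_bdd (AEStronglyMeasurable.mul ?_ ?_) (C := (2 * C) * (2 * C)) ?_
        · exact (hψm.comp (hX.meas _)).aestronglyMeasurable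
        · exact (hψm.comp (hX.meas _)).aestronglyMeasurable
        · intro ω
          rw [abs_mul]
          exact mul_le_mul (hψb _) (hψb _) (abs_nonneg _) (by positivity)
      -- Pker of h is ψ
      have hPkerh : Pker P h = ψ := by
        funext y
        have hsplit : Pker P h y
            = (∫ yz, f yz.1 ∂(P y)) + ∫ yz, f yz.2 ∂(P y) :=
          pker_add P (hfm.comp measurable_fst) (hfm.comp measurable_snd)
            (fun yz => hC _) (fun yz => hC _) y
        rw [hψ_def]
        simp only []
        rw [qfun_kernel P hfm hC y, hsplit]
        ring
      -- Part (i)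
      have hsum1 : (fun ω => ∑ u ∈ gen (n + 1), f (X u ω))
          = fun ω => ∑ u ∈ gen n, (f (X (u ++ [false]) ω) + f (X (u ++ [true]) ω)) :=
        funext fun ω => sum_gen_succ (fun u => f (X u ω)) n
      have hchild : ∀ u ∈ gen n,
          ∫ ω, (f (X (u ++ [false]) ω) + f (X (u ++ [true]) ω)) ∂Pr
            = ∫ ω, ψ (X u ω) ∂Pr := by
        intro u hu
        have hs := bmc_single Pr P hX hu hhm hhb
        rw [hPkerh] at hs
        exact hs
      have part1 : ∫ ω, (∑ u ∈ gen (n + 1), f (X u ω)) ∂Pr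
          = 2 ^ (n + 1) * Qpow P (n + 1) f x := by
        have e : ∫ ω, (∑ u ∈ gen (n + 1), f (X u ω)) ∂Pr
            = ∫ ω, (∑ u ∈ gen n, ψ (X u ω)) ∂Pr := by
          have intadd : ∀ u : List Bool,
              Integrable (fun ω => f (X (u ++ [false]) ω) + f (X (u ++ [true]) ω)) Pr :=
            fun u => (intc f hfm C hC _).add (intc f hfm C hC _)
          rw [hsum1,
            integral_finset_sum _ (fun u _ => intadd u),
            integral_finset_sum _ (fun u _ => intc ψ hψm _ hψb u)]
          exact Finset.sum_congr rfl hchild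
        rw [e, (ih ψ hψm ⟨2 * C, hψb⟩).1, qpow_succ]
        have e2 : Qpow P n ψ x = 2 * Qpow P n (Qfun P f) x :=
          congrFun (qpow_const_mul P hQfm hQfb 2 n) x
        rw [e2]
        ring
      refine ⟨part1, ?_⟩
      -- Part (ii)
      have hsq1 : ∀ ω, (∑ u ∈ gen (n + 1), f (X u ω)) ^ 2
          = ∑ u ∈ gen n, ∑ v ∈ gen n,
              (f (X (u ++ [false]) ω) + f (X (u ++ [true]) ω))
                * (f (X (v ++ [false]) ω) + f (X (v ++ [true]) ω)) := by
        intro ω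
        rw [sum_gen_succ (fun u => f (X u ω)) n, pow_two, Finset.sum_mul_sum]
      have step1 : ∫ ω, (∑ u ∈ gen (n + 1), f (X u ω)) ^ 2 ∂Pr
          = ∑ u ∈ gen n, ∑ v ∈ gen n, ∫ ω,
              (f (X (u ++ [false]) ω) + f (X (u ++ [true]) ω))
                * (f (X (v ++ [false]) ω) + f (X (v ++ [true]) ω)) ∂Pr := by
        simp only [hsq1]
        rw [integral_finset_sum _
          (fun u _ => integrable_finset_sum _ (fun v _ => intprod u v))]
        exact Finset.sum_congr rfl fun u _ => integral_finset_sum _ fun v _ => intprod u v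
      have stepT : ∫ ω, (∑ u ∈ gen n, ψ (X u ω)) ^ 2 ∂Pr
          = ∑ u ∈ gen n, ∑ v ∈ gen n, ∫ ω, ψ (X u ω) * ψ (X v ω) ∂Pr := by
        have e : ∀ ω, (∑ u ∈ gen n, ψ (X u ω)) ^ 2
            = ∑ u ∈ gen n, ∑ v ∈ gen n, ψ (X u ω) * ψ (X v ω) := fun ω => by
          rw [pow_two, Finset.sum_mul_sum]
        simp only [e]
        rw [integral_finset_sum _
          (fun u _ => integrable_finset_sum _ (fun v _ => intψψ u v))]
        exact Finset.sum_congr rfl fun u _ => integral_finset_sum _ fun v _ => intψψ u v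
      have claim_off : ∀ u ∈ gen n, ∀ v ∈ gen n, u ≠ v →
          ∫ ω, (f (X (u ++ [false]) ω) + f (X (u ++ [true]) ω))
              * (f (X (v ++ [false]) ω) + f (X (v ++ [true]) ω)) ∂Pr
            = ∫ ω, ψ (X u ω) * ψ (X v ω) ∂Pr := by
        intro u hu v hv huv
        have hp := bmc_pair Pr P hX hu hv huv hhm hhm hhb hhb
        rw [hPkerh] at hp
        exact hp
      have claim_diag : ∀ u ∈ gen n,
          ∫ ω, (f (X (u ++ [false]) ω) + f (X (u ++ [true]) ω))
              * (f (X (u ++ [false]) ω) + f (X (u ++ [true]) ω)) ∂Pr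
            = ∫ ω, Pker P h2 (X u ω) ∂Pr := by
        intro u hu
        exact bmc_single Pr P hX hu hh2m hh2b
      have per_u : ∀ u ∈ gen n,
          ∑ v ∈ gen n, ∫ ω,
              (f (X (u ++ [false]) ω) + f (X (u ++ [true]) ω))
                * (f (X (v ++ [false]) ω) + f (X (v ++ [true]) ω)) ∂Pr
            = (∑ v ∈ gen n, ∫ ω, ψ (X u ω) * ψ (X v ω) ∂Pr)
              + (∫ ω, Pker P h2 (X u ω) ∂Pr - ∫ ω, ψ (X u ω) * ψ (X u ω) ∂Pr) := by
        intro u hu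
        have hdiag : ∑ v ∈ gen n,
            ((∫ ω, (f (X (u ++ [false]) ω) + f (X (u ++ [true]) ω))
                * (f (X (v ++ [false]) ω) + f (X (v ++ [true]) ω)) ∂Pr)
              - ∫ ω, ψ (X u ω) * ψ (X v ω) ∂Pr)
            = ∫ ω, Pker P h2 (X u ω) ∂Pr - ∫ ω, ψ (X u ω) * ψ (X u ω) ∂Pr := by
          rw [Finset.sum_eq_single_of_mem u hu]
          · rw [claim_diag u hu]
          · intro v hv hvu
            rw [claim_off u hu v hv hvu.symm]
            exact sub_self _
        have hsub := Finset.sum_sub_distrib (s := gen n)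
          (f := fun v => ∫ ω,
              (f (X (u ++ [false]) ω) + f (X (u ++ [true]) ω))
                * (f (X (v ++ [false]) ω) + f (X (v ++ [true]) ω)) ∂Pr)
          (g := fun v => ∫ ω, ψ (X u ω) * ψ (X v ω) ∂Pr)
        rw [hsub] at hdiag
        linarith
      have hdiag_int : ∑ u ∈ gen n,
          (∫ ω, Pker P h2 (X u ω) ∂Pr - ∫ ω, ψ (X u ω) * ψ (X u ω) ∂Pr)
          = ∫ ω, (∑ u ∈ gen n, φ (X u ω)) ∂Pr := by
        rw [integral_finset_sum _ (fun u _ => intc φ hφm _ hφb u)]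
        refine Finset.sum_congr rfl fun u _ => ?_
        rw [← integral_sub (intc (Pker P h2) hPh2m _ hPh2b u)
          (intc (fun y => ψ y * ψ y) (hψm.mul hψm) _ hψψb u)]
      have main2 : ∫ ω, (∑ u ∈ gen (n + 1), f (X u ω)) ^ 2 ∂Pr
          = ∫ ω, (∑ u ∈ gen n, ψ (X u ω)) ^ 2 ∂Pr
            + ∫ ω, (∑ u ∈ gen n, φ (X u ω)) ∂Pr := by
        rw [step1, stepT, ← hdiag_int]
        rw [← Finset.sum_add_distrib]
        exact Finset.sum_congr rfl per_u
      rw [main2, (ih ψ hψm ⟨2 * C, hψb⟩).2, (ih φ hφm ⟨_, hφb⟩).1]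
      -- algebra on the Q-side
      have hf2m : Measurable fun y => f y ^ 2 := hfm.pow_const 2
      have hf2b : ∀ y, |f y ^ 2| ≤ C * C := fun y => by
        rw [pow_two, abs_mul]
        exact mul_le_mul (hC y) (hC y) (abs_nonneg _) hC0
      have hG0m : Measurable fun y => ∫ yz, f yz.1 * f yz.2 ∂(P y) :=
        pker_measurable P ((hfm.comp measurable_fst).mul (hfm.comp measurable_snd))
      have hG0b : ∀ y, |∫ yz, f yz.1 * f yz.2 ∂(P y)| ≤ C * C :=
        pker_bound P fun yz => by
          rw [abs_mul]
          exact mul_le_mul (hC _) (hC _) (abs_nonneg _) hC0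
      have hψ2m : Measurable fun y => ψ y ^ 2 := hψm.pow_const 2
      have hψ2b : ∀ y, |ψ y ^ 2| ≤ (2 * C) * (2 * C) := fun y => by
        rw [pow_two]; exact hψψb y
      -- e1 : combine diag terms
      have hcomb : (fun y => ψ y ^ 2 + φ y)
          = fun y => 2 * Qfun P (fun z => f z ^ 2) y
              + 2 * ∫ yz, f yz.1 * f yz.2 ∂(P y) := by
        funext y
        have hh2e : h2 = fun yz => (f yz.1 ^ 2 + f yz.2 ^ 2) + 2 * (f yz.1 * f yz.2) := by
          funext yz
          rw [hh2_def, hh_def]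
          ring
        have hp2 : Pker P h2 y
            = (∫ yz, (f yz.1 ^ 2 + f yz.2 ^ 2) ∂(P y))
              + 2 * ∫ yz, f yz.1 * f yz.2 ∂(P y) := by
          rw [hh2e]
          rw [pker_add P (g₁ := fun yz => f yz.1 ^ 2 + f yz.2 ^ 2)
            (g₂ := fun yz => 2 * (f yz.1 * f yz.2))
            (((hfm.comp measurable_fst).pow_const 2).add
              ((hfm.comp measurable_snd).pow_const 2))
            (measurable_const.mul ((hfm.comp measurable_fst).mul (hfm.comp measurable_snd)))
            (C₁ := C * C + C * C) (C₂ := 2 * (C * C))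
            (fun yz => (abs_add_le _ _).trans (add_le_add (hf2b _) (hf2b _)))
            (fun yz => by
              rw [abs_mul, abs_two]
              refine mul_le_mul_of_nonneg_left ?_ (by norm_num)
              rw [abs_mul]
              exact mul_le_mul (hC _) (hC _) (abs_nonneg _) hC0) y]
          rw [pker_const_mul P 2 (fun yz => f yz.1 * f yz.2) y]
          rfl
        have hsplitA : ∫ yz, (f yz.1 ^ 2 + f yz.2 ^ 2) ∂(P y)
            = (∫ yz, f yz.1 ^ 2 ∂(P y)) + ∫ yz, f yz.2 ^ 2 ∂(P y) :=
          integral_add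
            (integrable_of_bdd ((hfm.comp measurable_fst).pow_const 2).aestronglyMeasurable
              (fun yz => hf2b _))
            (integrable_of_bdd ((hfm.comp measurable_snd).pow_const 2).aestronglyMeasurable
              (fun yz => hf2b _))
        have hq2 : 2 * Qfun P (fun z => f z ^ 2) y
            = (∫ yz, f yz.1 ^ 2 ∂(P y)) + ∫ yz, f yz.2 ^ 2 ∂(P y) := by
          rw [qfun_kernel P hf2m hf2b y]
          ring
        have hφy : φ y = Pker P h2 y - ψ y * ψ y := rfl
        rw [hφy, hp2, hsplitA, hq2]
        ring
      have e1 : Qpow P n (fun y => ψ y ^ 2) x + Qpow P n φ x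
          = 2 * Qpow P (n + 1) (fun y => f y ^ 2) x
            + 2 * Qpow P n (fun y => ∫ yz, Qpow P 0 f yz.1 * Qpow P 0 f yz.2 ∂(P y)) x := by
        have a0 : Qpow P n (fun y => ψ y ^ 2) x + Qpow P n φ x
            = Qpow P n (fun y => ψ y ^ 2 + φ y) x :=
          (congrFun (qpow_add P hψ2m hφm hψ2b hφb n) x).symm
        rw [a0, hcomb]
        have hQf2m : Measurable (Qfun P (fun z => f z ^ 2)) := qfun_measurable P hf2m hf2b
        have hQf2b : ∀ y, |Qfun P (fun z => f z ^ 2) y| ≤ C * C := qfun_bound P hf2b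
        have a1 := congrFun (qpow_add P (hQf2m.const_mul 2)
          (hG0m.const_mul 2)
          (Cf := 2 * (C * C)) (Cg := 2 * (C * C))
          (fun y => by
            rw [abs_mul, abs_two]
            exact mul_le_mul_of_nonneg_left (hQf2b y) (by norm_num))
          (fun y => by
            rw [abs_mul, abs_two]
            exact mul_le_mul_of_nonneg_left (hG0b y) (by norm_num)) n) x
        rw [a1]
        have a2 := congrFun (qpow_const_mul P hQf2m hQf2b 2 n) x
        have a3 := congrFun (qpow_const_mul P hG0m hG0b 2 n) x
        rw [a2, a3, qpow_succ, qpow_zero]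
      -- the sum part
      have hψk : ∀ k y, Qpow P k ψ y = 2 * Qpow P (k + 1) f y := fun k y => by
        rw [qpow_succ]
        exact congrFun (qpow_const_mul P hQfm hQfb 2 k) y
      have hGm : ∀ j, Measurable fun y => ∫ yz, Qpow P j f yz.1 * Qpow P j f yz.2 ∂(P y) :=
        fun j => pker_measurable P
          (((qpow_meas_bdd P hfm hC j).1.comp measurable_fst).mul
            ((qpow_meas_bdd P hfm hC j).1.comp measurable_snd))
      have hGb : ∀ j y, |∫ yz, Qpow P j f yz.1 * Qpow P j f yz.2 ∂(P y)| ≤ C * C :=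
        fun j y => pker_bound P (fun yz => by
          rw [abs_mul]
          exact mul_le_mul ((qpow_meas_bdd P hfm hC j).2 _)
            ((qpow_meas_bdd P hfm hC j).2 _) (abs_nonneg _) hC0) y
      have hBk : ∀ k, (fun y => ∫ yz, Qpow P k ψ yz.1 * Qpow P k ψ yz.2 ∂(P y))
          = fun y => 4 * ∫ yz, Qpow P (k + 1) f yz.1 * Qpow P (k + 1) f yz.2 ∂(P y) := by
        intro k
        funext y
        rw [show (fun yz : S × S => Qpow P k ψ yz.1 * Qpow P k ψ yz.2)
            = fun yz => 4 * (Qpow P (k + 1) f yz.1 * Qpow P (k + 1) f yz.2) from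
          funext fun yz => by rw [hψk k yz.1, hψk k yz.2]; ring]
        exact integral_const_mul 4 _
      have hBsum : (∑ k ∈ Finset.range n, (2 : ℝ) ^ (n + k)
            * Qpow P (n - k - 1)
                (fun y => ∫ yz, Qpow P k ψ yz.1 * Qpow P k ψ yz.2 ∂(P y)) x)
          = ∑ k ∈ Finset.range n, (2 : ℝ) ^ ((n + 1) + (k + 1))
              * Qpow P ((n + 1) - (k + 1) - 1)
                  (fun y => ∫ yz, Qpow P (k + 1) f yz.1 * Qpow P (k + 1) f yz.2 ∂(P y)) x := by
        refine Finset.sum_congr rfl fun k _ => ?_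
        have hidx : (n + 1) - (k + 1) - 1 = n - k - 1 := by omega
        rw [hidx, hBk k]
        have a4 := congrFun (qpow_const_mul P (hGm (k + 1)) (hGb (k + 1)) 4 (n - k - 1)) x
        rw [a4]
        ring
      rw [hBsum, Finset.sum_range_succ']
      have hidx0 : n + 1 - 0 - 1 = n := by omega
      rw [hidx0]
      linear_combination (2 : ℝ) ^ n * e1
  exact key n f hfm hfb
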